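/- Let ρ > 1, σ̃² > 0 and f ≥ 0. Let μ be the measure on ℝ given by Lebesgue measure with density p, where p(x) = 1/(2·ln(ρ)·x) for x ∈ [σ̃²/ρ, ρ·σ̃²] and p(x) = 0 otherwise, for τ ∈ ℝ let ε(τ) = μ{x : x ≥ τ} + μ{x : x ≤ τ − f}, and set τ* = min(f + σ̃²/ρ, ρ·σ̃²). Then ε(τ*) = 1 − ln(1 + ρ·f/σ̃²)/(2·ln(ρ)) if f ≤ σ̃²·(ρ − 1/ρ), and ε(τ*) = 0 if f > σ̃²·(ρ − 1/ρ). -/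

import Mathlib

open MeasureTheory ENNReal

lemma lint_one_div_mul (c lo hi : ℝ) (hc : 0 < c) (hlo : 0 < lo) (hle : lo ≤ hi) :
    ∫⁻ x in Set.Icc lo hi, ENNReal.ofReal (1 / (c * x)) =
      ENNReal.ofReal ((Real.log hi - Real.log lo) / c) := by
  have hcont : ContinuousOn (fun x : ℝ => 1 / (c * x)) (Set.Icc lo hi) := by
    apply ContinuousOn.div continuousOn_const (continuousOn_const.mul continuousOn_id)
    intro x hx
    have : 0 < x := lt_of_lt_of_le hlo hx.1
    exact mul_ne_zero hc.ne' this.ne'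
  have hint : IntegrableOn (fun x : ℝ => 1 / (c * x)) (Set.Icc lo hi) :=
    hcont.integrableOn_Icc
  rw [← MeasureTheory.ofReal_integral_eq_lintegral_ofReal hint ?_]
  · congr 1
    rw [MeasureTheory.integral_Icc_eq_integral_Ioc, ← intervalIntegral.integral_of_le hle]
    have h0 : (0:ℝ) ∉ Set.uIcc lo hi := by
      rw [Set.uIcc_of_le hle]
      intro h
      exact absurd h.1 (not_le.mpr hlo)
    simp only [one_div, mul_inv]
    rw [intervalIntegral.integral_const_mul, integral_inv h0,
      Real.log_div (by linarith : hi ≠ 0) (ne_of_gt hlo)]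
    ring
  · filter_upwards [ae_restrict_mem measurableSet_Icc] with x hx
    have : 0 < x := lt_of_lt_of_le hlo hx.1
    positivity

lemma mu_apply (ρ σ2 : ℝ) {S : Set ℝ} (hS : MeasurableSet S) :
    MeasureTheory.volume.withDensity (fun x =>
      if x ∈ Set.Icc (σ2 / ρ) (ρ * σ2) then ENNReal.ofReal (1 / (2 * Real.log ρ * x)) else 0) S
    = ∫⁻ x in Set.Icc (σ2 / ρ) (ρ * σ2) ∩ S,
        ENNReal.ofReal (1 / (2 * Real.log ρ * x)) := by
  calc MeasureTheory.volume.withDensity (fun x =>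
      if x ∈ Set.Icc (σ2 / ρ) (ρ * σ2) then ENNReal.ofReal (1 / (2 * Real.log ρ * x)) else 0) S
      = ∫⁻ x in S, (Set.Icc (σ2 / ρ) (ρ * σ2)).indicator
          (fun x => ENNReal.ofReal (1 / (2 * Real.log ρ * x))) x := by
        rw [withDensity_apply _ hS]
        exact lintegral_congr fun x => by rw [Set.indicator_apply]
    _ = _ := setLIntegral_indicator measurableSet_Icc _

theorem minimum_detection_error_probability (ρ σ2 f : ℝ) (hρ : 1 < ρ) (hσ : 0 < σ2)
    (hf : 0 ≤ f) :
    let μ : Measure ℝ := MeasureTheory.volume.withDensity (fun x =>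
      if x ∈ Set.Icc (σ2 / ρ) (ρ * σ2) then ENNReal.ofReal (1 / (2 * Real.log ρ * x))
      else 0)
    let ε : ℝ → ℝ≥0∞ := fun τ => μ {x | τ ≤ x} + μ {x | x ≤ τ - f}
    let τs : ℝ := min (f + σ2 / ρ) (ρ * σ2)
    (f ≤ σ2 * (ρ - 1 / ρ) →
      ε τs = ENNReal.ofReal (1 - Real.log (1 + ρ * f / σ2) / (2 * Real.log ρ))) ∧
    (σ2 * (ρ - 1 / ρ) < f → ε τs = 0) := by
  intro μ ε τs
  have hρ0 : 0 < ρ := lt_trans one_pos hρ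
  have hlρ : 0 < Real.log ρ := Real.log_pos hρ
  have hlo : 0 < σ2 / ρ := div_pos hσ hρ0
  have hbound : σ2 * (ρ - 1 / ρ) = ρ * σ2 - σ2 / ρ := by ring
  have hIcc : σ2 / ρ ≤ ρ * σ2 := by
    have h1 : 1 / ρ ≤ 1 := by rw [div_le_one hρ0]; linarith
    have : (0:ℝ) ≤ σ2 * (ρ - 1 / ρ) := mul_nonneg hσ.le (by linarith)
    linarith [hbound ▸ this]
  have hS1 : {x : ℝ | τs ≤ x} = Set.Ici τs := rfl
  have hS2 : {x : ℝ | x ≤ τs - f} = Set.Iic (τs - f) := rfl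
  constructor
  · intro hc
    have hc' : f + σ2 / ρ ≤ ρ * σ2 := by rw [hbound] at hc; linarith
    have hτ : τs = f + σ2 / ρ := min_eq_left hc'
    simp only [ε, μ, hS1, hS2]
    rw [mu_apply ρ σ2 measurableSet_Ici, mu_apply ρ σ2 measurableSet_Iic]
    have h1 : Set.Icc (σ2 / ρ) (ρ * σ2) ∩ Set.Ici τs = Set.Icc (f + σ2 / ρ) (ρ * σ2) := by
      ext x
      simp only [Set.mem_inter_iff, Set.mem_Icc, Set.mem_Ici, hτ]
      constructor
      · rintro ⟨⟨_, h2⟩, h3⟩; exact ⟨h3, h2⟩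
      · rintro ⟨h1x, h2x⟩; exact ⟨⟨by linarith, h2x⟩, h1x⟩
    have h2 : Set.Icc (σ2 / ρ) (ρ * σ2) ∩ Set.Iic (τs - f) = {σ2 / ρ} := by
      ext x
      simp only [Set.mem_inter_iff, Set.mem_Icc, Set.mem_Iic, Set.mem_singleton_iff, hτ]
      constructor
      · rintro ⟨⟨ha, _⟩, hb⟩; linarith
      · rintro rfl; exact ⟨⟨le_refl _, hIcc⟩, by linarith⟩
    rw [h1, h2]
    rw [lint_one_div_mul (2 * Real.log ρ) (f + σ2 / ρ) (ρ * σ2) (by positivity)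
      (by positivity) hc']
    rw [setLIntegral_measure_zero _ _ Real.volume_singleton, add_zero]
    congr 1
    have e1 : Real.log (ρ * σ2) = Real.log ρ + Real.log σ2 :=
      Real.log_mul (ne_of_gt hρ0) (ne_of_gt hσ)
    have e2 : Real.log (f + σ2 / ρ) = Real.log (ρ * f + σ2) - Real.log ρ := by
      rw [show f + σ2 / ρ = (ρ * f + σ2) / ρ by field_simp,
        Real.log_div (by positivity) (ne_of_gt hρ0)]
    have e3 : Real.log (1 + ρ * f / σ2) = Real.log (ρ * f + σ2) - Real.log σ2 := by
      rw [show 1 + ρ * f / σ2 = (ρ * f + σ2) / σ2 by field_simp; ring,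
        Real.log_div (by positivity) (ne_of_gt hσ)]
    rw [e1, e2, e3]
    field_simp
    ring
  · intro hc
    have hc' : ρ * σ2 ≤ f + σ2 / ρ := by rw [hbound] at hc; linarith
    have hτ : τs = ρ * σ2 := min_eq_right hc'
    simp only [ε, μ, hS1, hS2]
    rw [mu_apply ρ σ2 measurableSet_Ici, mu_apply ρ σ2 measurableSet_Iic]
    have h1 : Set.Icc (σ2 / ρ) (ρ * σ2) ∩ Set.Ici τs = {ρ * σ2} := by
      ext x
      simp only [Set.mem_inter_iff, Set.mem_Icc, Set.mem_Ici, Set.mem_singleton_iff, hτ]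
      constructor
      · rintro ⟨⟨_, ha⟩, hb⟩; linarith
      · rintro rfl; exact ⟨⟨hIcc, le_refl _⟩, le_refl _⟩
    have h2 : Set.Icc (σ2 / ρ) (ρ * σ2) ∩ Set.Iic (τs - f) = ∅ := by
      rw [Set.eq_empty_iff_forall_notMem]
      rintro x ⟨⟨ha, _⟩, hb⟩
      rw [hbound] at hc
      simp only [Set.mem_Iic, hτ] at hb
      linarith
    rw [h1, h2, setLIntegral_measure_zero _ _ Real.volume_singleton]
    simp
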